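/- Lower bound on total work overload: under the recursion z_1 = 0, w_t = max(0, z_t + b_t − l), z_{t+1} = max(0, min(z_t + b_t, l) − c) for t = 1,...,n with l ≥ c > 0 and b_t ≥ 0, the total work overload satisfies ∑_{t=1}^n w_t ≥ (∑_{t=1}^n b_t) − n·c − (l − c). -/
import Mathlib


/-- Lower bound on total work overload: under the single-station dynamics
`z 1 = 0`, `w t = max 0 (z t + b t - l)`, `z (t+1) = max 0 (min (z t + b t) l - c)`
for `t = 1,…,n` with `l ≥ c > 0` and `b t ≥ 0`, the total work overload is at
least the total processing time minus the capacity `n·c` minus the slack `l - c`. -/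
theorem total_work_overload_lower_bound
    (n : ℕ) (c l : ℝ) (hc : 0 < c) (hl : c ≤ l)
    (z w b : ℕ → ℝ) (hb : ∀ t, 1 ≤ t → t ≤ n → 0 ≤ b t)
    (hz1 : z 1 = 0)
    (hw : ∀ t, 1 ≤ t → t ≤ n → w t = max 0 (z t + b t - l))
    (hz : ∀ t, 1 ≤ t → t ≤ n → z (t + 1) = max 0 (min (z t + b t) l - c)) :
    (∑ t ∈ Finset.Icc 1 n, b t) - n * c - (l - c) ≤ ∑ t ∈ Finset.Icc 1 n, w t := by
  have key : ∀ m, m ≤ n → ∑ t ∈ Finset.Icc 1 m, (b t - c - w t) ≤ z (m + 1) := by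
    intro m
    induction m with
    | zero => intro _; simp [hz1]
    | succ k ih =>
      intro hkn
      have hk : k ≤ n := Nat.le_of_succ_le hkn
      have h1 : 1 ≤ k + 1 := Nat.le_add_left 1 k
      rw [Finset.sum_Icc_succ_top h1]
      have hwk := hw (k + 1) h1 hkn
      have hzk := hz (k + 1) h1 hkn
      have hmin : min (z (k + 1) + b (k + 1)) l = z (k + 1) + b (k + 1) - w (k + 1) := by
        rw [hwk]
        rcases le_total (z (k + 1) + b (k + 1)) l with h | h
        · rw [min_eq_left h, max_eq_left (by linarith)]; ring
        · rw [min_eq_right h, max_eq_right (by linarith)]; ring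
      have hge : z (k + 1) + b (k + 1) - w (k + 1) - c ≤ z (k + 1 + 1) := by
        rw [hzk, hmin]; exact le_max_right _ _
      have := ih hk
      linarith
  rcases Nat.eq_zero_or_pos n with rfl | hn
  · simp; linarith
  · have h := key n le_rfl
    have hzn : z (n + 1) ≤ l - c := by
      rw [hz n hn le_rfl]
      exact max_le (by linarith) (by have := min_le_right (z n + b n) l; linarith)
    have hsum : ∑ t ∈ Finset.Icc 1 n, (b t - c - w t)
        = (∑ t ∈ Finset.Icc 1 n, b t) - n * c - ∑ t ∈ Finset.Icc 1 n, w t := by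
      rw [Finset.sum_sub_distrib, Finset.sum_sub_distrib, Finset.sum_const,
        Nat.card_Icc]
      simp
    rw [hsum] at h
    linarith
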